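/- For real κ with 0<κ<1, ∫₀^∞ exp_κ(-t) dt = 1/(1-κ²). -/

import Mathlib

noncomputable def kexp (κ x : ℝ) : ℝ :=
  (Real.sqrt (1 + κ^2 * x^2) + κ*x) ^ (1/κ : ℝ)

theorem kexp_integral (κ : ℝ) (h0 : 0 < κ) (h1 : κ < 1) :
    ∫ t in Set.Ioi (0:ℝ), kexp κ (-t) = 1/(1 - κ^2) := by
  have hκ2 : (0:ℝ) < 1 - κ^2 := by nlinarith
  set S : ℝ → ℝ := fun t => Real.sqrt (1 + κ^2 * t^2) with hSdef
  have hSpos : ∀ t, 0 < S t := fun t => Real.sqrt_pos.2 (by nlinarith)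
  have hSsq : ∀ t, S t ^ 2 = 1 + κ^2 * t^2 := fun t =>
    Real.sq_sqrt (by nlinarith)
  have hwpos : ∀ t, 0 < S t - κ * t := by
    intro t
    have h := abs_le_abs (le_refl (κ * t))
    have : κ * t < S t := by
      rcases le_or_gt (κ * t) 0 with h | h
      · exact lt_of_le_of_lt h (hSpos t)
      · nlinarith [hSpos t, hSsq t]
    linarith
  have hkexp_eq : ∀ t, kexp κ (-t) = (S t - κ * t) ^ (1/κ : ℝ) := by
    intro t
    simp [kexp, hSdef, neg_sq, mul_comm]
    ring_nf
  have hfpos : ∀ t, 0 < kexp κ (-t) := by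
    intro t
    rw [hkexp_eq]
    exact Real.rpow_pos_of_pos (hwpos t) _
  -- derivative of S
  have hS' : ∀ x : ℝ, HasDerivAt S (κ^2 * x / S x) x := by
    intro x
    have h1 : HasDerivAt (fun t : ℝ => 1 + κ^2 * t^2) (κ^2 * (2*x)) x := by
      simpa using ((hasDerivAt_pow 2 x).const_mul (κ^2)).const_add 1
    have h2 := h1.sqrt (by positivity)
    convert h2 using 1
    rw [hSdef]
    field_simp
  -- derivative of kexp κ (-t)
  have hf' : ∀ x : ℝ, HasDerivAt (fun t => kexp κ (-t))
      (-(kexp κ (-x)) / S x) x := by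
    intro x
    have hw : HasDerivAt (fun t => S t - κ * t) (κ^2 * x / S x - κ) x :=
      (hS' x).sub (by simpa using (hasDerivAt_id x).const_mul κ)
    have h := hw.rpow_const (p := (1/κ : ℝ)) (Or.inl (ne_of_gt (hwpos x)))
    have heq : (fun t => (S t - κ * t) ^ (1/κ : ℝ)) = fun t => kexp κ (-t) := by
      funext t; rw [hkexp_eq]
    rw [heq] at h
    convert h using 1
    rw [hkexp_eq]
    have hSne : S x ≠ 0 := ne_of_gt (hSpos x)
    have hwne : S x - κ * x ≠ 0 := ne_of_gt (hwpos x)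
    rw [Real.rpow_sub_one hwne]
    field_simp
    nlinarith [hSsq x, Real.rpow_pos_of_pos (hwpos x) (1/κ : ℝ)]
  -- antiderivative
  set g : ℝ → ℝ := fun t => -((S t + κ^2 * t) * kexp κ (-t)) / (1 - κ^2) with hgdef
  have hg' : ∀ x : ℝ, HasDerivAt g (kexp κ (-x)) x := by
    intro x
    have h1 : HasDerivAt (fun t => S t + κ^2 * t) (κ^2 * x / S x + κ^2) x :=
      (hS' x).add (by simpa using (hasDerivAt_id x).const_mul (κ^2))
    have h2 := (h1.mul (hf' x)).neg.div_const (1 - κ^2)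
    refine h2.congr_deriv ?_
    have hSne : S x ≠ 0 := ne_of_gt (hSpos x)
    have hκne : 1 - κ^2 ≠ 0 := ne_of_gt hκ2
    field_simp
    ring
  -- tendsto 0 at top
  have hlim : Filter.Tendsto g Filter.atTop (nhds 0) := by
    set C : ℝ := 3 * κ ^ (-(1/κ) : ℝ) / (1 - κ^2) with hCdef
    have hy : (0:ℝ) < 1/κ - 1 := by
      rw [lt_sub_iff_add_lt, zero_add, lt_div_iff₀ h0, one_mul]
      exact h1
    have hlow : Filter.Tendsto (fun t : ℝ => -C * t ^ (-(1/κ - 1) : ℝ))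
        Filter.atTop (nhds 0) := by
      have := (tendsto_rpow_neg_atTop hy).const_mul (-C)
      simpa using this
    apply tendsto_of_tendsto_of_tendsto_of_le_of_le' hlow tendsto_const_nhds
    · -- lower bound eventually
      filter_upwards [Filter.eventually_ge_atTop (1:ℝ)] with t ht
      have htpos : (0:ℝ) < t := lt_of_lt_of_le one_pos ht
      have hw_eq : (S t - κ * t) * (S t + κ * t) = 1 := by
        nlinarith [hSsq t]
      have hSle : S t ≤ 1 + κ * t := by
        have : (S t)^2 ≤ (1 + κ*t)^2 := by nlinarith [hSsq t, mul_pos h0 htpos]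
        nlinarith [hSpos t, mul_pos h0 htpos]
      have hwle : S t - κ * t ≤ (κ * t)⁻¹ := by
        have hkt : 0 < κ * t := mul_pos h0 htpos
        have h2 : κ * t ≤ S t + κ * t := by linarith [hSpos t]
        have h3 : S t - κ * t = (S t + κ * t)⁻¹ := by
          exact eq_inv_of_mul_eq_one_left hw_eq
        rw [h3]
        exact inv_anti₀ hkt h2
      have hfle : kexp κ (-t) ≤ κ ^ (-(1/κ):ℝ) * t ^ (-(1/κ):ℝ) := by
        rw [hkexp_eq]
        have := Real.rpow_le_rpow (le_of_lt (hwpos t)) hwle (by positivity : (0:ℝ) ≤ 1/κ)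
        calc (S t - κ * t) ^ (1/κ:ℝ) ≤ ((κ*t)⁻¹) ^ (1/κ:ℝ) := this
          _ = κ ^ (-(1/κ):ℝ) * t ^ (-(1/κ):ℝ) := by
              rw [← Real.rpow_neg_one (κ*t), ← Real.rpow_mul (by positivity)]
              rw [show (-1)*(1/κ:ℝ) = -(1/κ) by ring]
              rw [Real.mul_rpow (le_of_lt h0) (le_of_lt htpos)]
      have hprod : (S t + κ^2 * t) * kexp κ (-t) ≤ C * (1 - κ^2) * t ^ (-(1/κ - 1):ℝ) := by
        have h3t : S t + κ^2 * t ≤ 3 * t := by nlinarith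
        have hfnn := le_of_lt (hfpos t)
        have hrw : (t:ℝ) ^ (-(1/κ - 1):ℝ) = t * t ^ (-(1/κ):ℝ) := by
          rw [show (-(1/κ - 1):ℝ) = 1 + (-(1/κ)) by ring,
            Real.rpow_add htpos, Real.rpow_one]
        rw [hrw, hCdef]
        have hCsimp : 3 * κ ^ (-(1/κ):ℝ) / (1 - κ^2) * (1 - κ^2) = 3 * κ ^ (-(1/κ):ℝ) := by
          field_simp
        rw [hCsimp]
        calc (S t + κ^2 * t) * kexp κ (-t) ≤ (3*t) * (κ ^ (-(1/κ):ℝ) * t ^ (-(1/κ):ℝ)) := by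
              apply mul_le_mul h3t hfle hfnn (by positivity)
          _ = 3 * κ ^ (-(1/κ):ℝ) * (t * t ^ (-(1/κ):ℝ)) := by ring
      rw [hgdef]
      simp only
      rw [neg_mul, neg_div, neg_le_neg_iff, div_le_iff₀ hκ2]
      linarith [hprod]
    · -- upper bound
      filter_upwards with t
      rw [hgdef]
      simp only
      have : 0 ≤ (S t + κ^2 * t) * kexp κ (-t) ∨ True := Or.inr trivial
      have hnum : 0 < S t + κ^2 * t ∨ True := Or.inr trivial
      rw [neg_div, neg_nonpos]
      have hSt := hSpos t
      have hkt : 0 ≤ S t + κ^2 * t := by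
        rcases le_or_gt 0 t with h | h
        · positivity
        · nlinarith [hSsq t, hfpos t]
      exact div_nonneg (mul_nonneg hkt (le_of_lt (hfpos t))) (le_of_lt hκ2)
  have key := MeasureTheory.integral_Ioi_of_hasDerivAt_of_nonneg'
    (g := g) (g' := fun t => kexp κ (-t)) (a := 0)
    (fun x _ => hg' x) (fun x _ => le_of_lt (hfpos x)) hlim
  rw [key, hgdef]
  simp only
  have : S 0 = 1 := by simp [hSdef]
  rw [this]
  have hk0 : kexp κ 0 = 1 := by simp [kexp]
  norm_num [hk0]
  rw [neg_div, neg_neg, one_div]
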